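/- Let Φ : C → C be an endofunctor and (L ⊣ R, η, ε) : C ⇄ D an adjunction. Set α := LΦη^{-1} : (LΦR)∘L ⇒ L∘Φ, a natural isomorphism defined on Fix_η(C) (where η is invertible), and β := ηΦR : Φ∘R ⇒ R∘(LΦR). Then (Alg_{L,α} ⊣ Alg_{R,β}, η, ε) : Alg(Φ)|Fix_η(C) ⇄ Alg(LΦR)|Fix_ε(D) is a well-defined adjoint equivalence whose unit and counit components are the components of η and ε. -/

import Mathlib

/-!
STATEMENT 4: Let `Φ : C → C` be an endofunctor and `(L ⊣ R, η, ε) : C ⇄ D` an adjunction.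
Set `α := LΦη⁻¹ : (LΦR)∘L ⇒ L∘Φ`, a natural isomorphism defined on `Fix_η(C)` (where `η` is
invertible), and `β := ηΦR : Φ∘R ⇒ R∘(LΦR)`.  Then
`(Alg_{L,α} ⊣ Alg_{R,β}, η, ε) : Alg(Φ)|Fix_η(C) ⇄ Alg(LΦR)|Fix_ε(D)` is a well-defined
adjoint equivalence whose unit and counit components are the components of `η` and `ε`.
-/

open CategoryTheory

universe v₁ v₂ u₁ u₂

variable {C : Type u₁} [Category.{v₁} C] {D : Type u₂} [Category.{v₂} D]

/-- The restriction of the category of `Φ`-algebras to the full subcategory given by `P`. -/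
abbrev AlgSub (Φ : C ⥤ C) (P : C → Prop) :=
  ObjectProperty.FullSubcategory (fun A : Endofunctor.Algebra Φ => P A.a)

/-- The lifted functor `Alg_{L,α}` sending `(X, a)` to `(LX, La ∘ α_X)` and `f` to `Lf`. -/
def algMap (Φ : C ⥤ C) (Ψ : D ⥤ D) (P : C → Prop) (Q : D → Prop)
    (L : C ⥤ D) (hL : ∀ X : C, P X → Q (L.obj X))
    (α : ObjectProperty.ι P ⋙ L ⋙ Ψ ⟶ ObjectProperty.ι P ⋙ Φ ⋙ L) :
    AlgSub Φ P ⥤ AlgSub Ψ Q where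
  obj A := ⟨⟨L.obj A.obj.a, α.app ⟨A.obj.a, A.property⟩ ≫ L.map A.obj.str⟩, hL _ A.property⟩
  map {A B} f :=
    InducedCategory.homMk
    { f := L.map (Endofunctor.Algebra.Hom.f f.hom)
      h := by
        have hn := α.naturality (X := ⟨A.obj.a, A.property⟩) (Y := ⟨B.obj.a, B.property⟩)
          (InducedCategory.homMk (Endofunctor.Algebra.Hom.f f.hom))
        have hf := Endofunctor.Algebra.Hom.h f.hom
        dsimp at hn ⊢
        change Ψ.map (L.map f.hom.f) ≫ _ = _ ≫ L.map (Φ.map f.hom.f) at hn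
        rw [← Category.assoc, hn, Category.assoc, ← L.map_comp, hf, L.map_comp, Category.assoc] }
  map_id A := by
    apply ObjectProperty.hom_ext
    apply Endofunctor.Algebra.ext
    show L.map (𝟙 A.obj.a) = 𝟙 (L.obj A.obj.a)
    simp
  map_comp {A B E} f g := by
    apply ObjectProperty.hom_ext
    apply Endofunctor.Algebra.ext
    show L.map (Endofunctor.Algebra.Hom.f f.hom ≫ Endofunctor.Algebra.Hom.f g.hom) =
      L.map (Endofunctor.Algebra.Hom.f f.hom) ≫ L.map (Endofunctor.Algebra.Hom.f g.hom)
    simp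

/-- `L` maps `Fix_η(C)` into `Fix_ε(D)`. -/
theorem isIso_counit_app_of_isIso_unit_app {L : C ⥤ D} {R : D ⥤ C} (adj : L ⊣ R)
    (X : C) (h : IsIso (adj.unit.app X)) : IsIso (adj.counit.app (L.obj X)) := by
  haveI := h
  haveI : IsIso (L.map (adj.unit.app X) ≫ adj.counit.app (L.obj X)) := by
    rw [adj.left_triangle_components X]; exact IsIso.id _
  exact IsIso.of_isIso_comp_left (L.map (adj.unit.app X)) (adj.counit.app (L.obj X))

/-- `R` maps `Fix_ε(D)` into `Fix_η(C)`. -/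
theorem isIso_unit_app_of_isIso_counit_app {L : C ⥤ D} {R : D ⥤ C} (adj : L ⊣ R)
    (Y : D) (h : IsIso (adj.counit.app Y)) : IsIso (adj.unit.app (R.obj Y)) := by
  haveI := h
  haveI : IsIso (adj.unit.app (R.obj Y) ≫ R.map (adj.counit.app Y)) := by
    rw [adj.right_triangle_components Y]; exact IsIso.id _
  exact IsIso.of_isIso_comp_right (adj.unit.app (R.obj Y)) (R.map (adj.counit.app Y))

theorem stmt4 (Φ : C ⥤ C) (L : C ⥤ D) (R : D ⥤ C) (adj : L ⊣ R)
    (α : ObjectProperty.ι (fun X : C => IsIso (adj.unit.app X)) ⋙ L ⋙ (R ⋙ Φ ⋙ L) ⟶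
         ObjectProperty.ι (fun X : C => IsIso (adj.unit.app X)) ⋙ Φ ⋙ L)
    (hα : ∀ X : ObjectProperty.FullSubcategory (fun X : C => IsIso (adj.unit.app X)),
      α.app X = L.map (Φ.map (@CategoryTheory.inv _ _ _ _ (adj.unit.app X.obj) X.property)))
    (β : ObjectProperty.ι (fun Y : D => IsIso (adj.counit.app Y)) ⋙ R ⋙ Φ ⟶
         ObjectProperty.ι (fun Y : D => IsIso (adj.counit.app Y)) ⋙ (R ⋙ Φ ⋙ L) ⋙ R)
    (hβ : ∀ Y : ObjectProperty.FullSubcategory (fun Y : D => IsIso (adj.counit.app Y)),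
      β.app Y = adj.unit.app (Φ.obj (R.obj Y.obj))) :
    ∃ adj' : algMap Φ (R ⋙ Φ ⋙ L) _ _ L (fun X => isIso_counit_app_of_isIso_unit_app adj X) α ⊣
             algMap (R ⋙ Φ ⋙ L) Φ _ _ R (fun Y => isIso_unit_app_of_isIso_counit_app adj Y) β,
      (∀ A : AlgSub Φ (fun X : C => IsIso (adj.unit.app X)),
        Endofunctor.Algebra.Hom.f (adj'.unit.app A).hom = adj.unit.app A.obj.a) ∧
      (∀ B : AlgSub (R ⋙ Φ ⋙ L) (fun Y : D => IsIso (adj.counit.app Y)),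
        Endofunctor.Algebra.Hom.f (adj'.counit.app B).hom = adj.counit.app B.obj.a) ∧
      IsIso adj'.unit ∧ IsIso adj'.counit := by
  
  classical
  -- the unit natural transformation
  let adj' : algMap Φ (R ⋙ Φ ⋙ L) _ _ L (fun X => isIso_counit_app_of_isIso_unit_app adj X) α ⊣
      algMap (R ⋙ Φ ⋙ L) Φ _ _ R (fun Y => isIso_unit_app_of_isIso_counit_app adj Y) β := {
    unit := {
      app := fun A => InducedCategory.homMk ({
        f := adj.unit.app A.obj.a
        h := by
          dsimp [algMap]
          rw [hβ, hα]
          have h1 : Φ.map (adj.unit.app A.obj.a) ≫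
              adj.unit.app (Φ.obj (R.obj (L.obj A.obj.a))) =
              adj.unit.app (Φ.obj A.obj.a) ≫
              R.map (L.map (Φ.map (adj.unit.app A.obj.a))) :=
            adj.unit.naturality (Φ.map (adj.unit.app A.obj.a))
          haveI := A.property
          rw [← Category.assoc, h1, Category.assoc, ← R.map_comp, ← Category.assoc,
            ← L.map_comp, ← Φ.map_comp, IsIso.hom_inv_id, Φ.map_id, L.map_id,
            Category.id_comp]
          exact (adj.unit.naturality A.obj.str).symm
      } : Endofunctor.Algebra.Hom _ _)
      naturality := fun A B f => by
        apply ObjectProperty.hom_ext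
        apply Endofunctor.Algebra.Hom.ext
        exact adj.unit.naturality f.hom.f }
    counit := {
      app := fun B => InducedCategory.homMk ({
        f := adj.counit.app B.obj.a
        h := by
          dsimp [algMap]
          rw [hβ, hα]
          haveI := B.property
          haveI := isIso_unit_app_of_isIso_counit_app adj B.obj.a B.property
          have hinv : inv (adj.unit.app (R.obj B.obj.a)) = R.map (adj.counit.app B.obj.a) :=
            IsIso.inv_eq_of_hom_inv_id (adj.right_triangle_components B.obj.a)
          have h2 : L.map (R.map B.obj.str) ≫ adj.counit.app B.obj.a =
              adj.counit.app (L.obj (Φ.obj (R.obj B.obj.a))) ≫ B.obj.str :=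
            adj.counit.naturality B.obj.str
          rw [hinv]
          dsimp only
          simp only [L.map_comp, Category.assoc]
          rw [h2, adj.left_triangle_components_assoc]
      } : Endofunctor.Algebra.Hom _ _)
      naturality := fun A B f => by
        apply ObjectProperty.hom_ext
        apply Endofunctor.Algebra.Hom.ext
        exact adj.counit.naturality f.hom.f }
    left_triangle_components := fun A => by
      apply ObjectProperty.hom_ext
      apply Endofunctor.Algebra.Hom.ext
      exact adj.left_triangle_components A.obj.a
    right_triangle_components := fun B => by
      apply ObjectProperty.hom_ext
      apply Endofunctor.Algebra.Hom.ext
      exact adj.right_triangle_components B.obj.a }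
  refine ⟨adj', ?_, ?_, ?_, ?_⟩
  · intro A; rfl
  · intro B; rfl
  · haveI : ∀ A : AlgSub Φ (fun X : C => IsIso (adj.unit.app X)),
        IsIso (adj'.unit.app A) := fun A => by
      haveI : IsIso (Endofunctor.Algebra.Hom.f
          ((ObjectProperty.ι _).map (adj'.unit.app A))) := A.property
      haveI : IsIso ((ObjectProperty.ι _).map (adj'.unit.app A)) :=
        Endofunctor.Algebra.iso_of_iso _
      exact isIso_of_reflects_iso _ (ObjectProperty.ι _)
    exact NatIso.isIso_of_isIso_app _
  · haveI : ∀ B : AlgSub (R ⋙ Φ ⋙ L) (fun Y : D => IsIso (adj.counit.app Y)),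
        IsIso (adj'.counit.app B) := fun B => by
      haveI : IsIso (Endofunctor.Algebra.Hom.f
          ((ObjectProperty.ι _).map (adj'.counit.app B))) := B.property
      haveI : IsIso ((ObjectProperty.ι _).map (adj'.counit.app B)) :=
        Endofunctor.Algebra.iso_of_iso _
      exact isIso_of_reflects_iso _ (ObjectProperty.ι _)
    exact NatIso.isIso_of_isIso_app _
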